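/- For all n ≥ 4, ∑_{j=1}^{n-2} 3·a(n-2, j) ≤ φ(n-1). -/

import Mathlib

/-- `F n = (a n ·, b n ·, φ n)` from the recursive construction;
    `φ 1 := 1` by convention. -/
def F : ℕ → ((ℕ → ℚ) × (ℕ → ℚ) × ℚ)
  | 0 => (fun _ => 0, fun _ => 0, 1)
  | 1 => (fun j => if j = 1 then 1 else 0, fun j => if j = 1 then 1 else 0, 1)
  | (n+2) =>
      let p := F (n+1)
      let th : ℚ := 3 * p.1 (n+1)
      let ph : ℚ := if n = 0 then 4
        else 4 * ∑ j ∈ Finset.Icc 1 (n+1), (th * p.2.1 j - 3 * p.1 j)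
      (fun j => if j = n+2 then ph else 4 * p.1 j,
       fun j => if j = n+2 then 1 else (1 + th) * p.2.1 j,
       ph)

/-- coefficient `a(n,j)` -/
def a (n j : ℕ) : ℚ := (F n).1 j
/-- coefficient `b(n,j)` -/
def b (n j : ℕ) : ℚ := (F n).2.1 j
/-- `φ(n)` -/
def phi (n : ℕ) : ℚ := (F n).2.2
/-- `θ(n) = 3·a(n-1,n-1)` -/
def theta (n : ℕ) : ℚ := 3 * a (n-1) (n-1)
lemma a_one (j : ℕ) : a 1 j = if j = 1 then 1 else 0 := rfl
lemma b_one (j : ℕ) : b 1 j = if j = 1 then 1 else 0 := rfl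
lemma theta_succ (m : ℕ) : theta (m+2) = 3 * a (m+1) (m+1) := rfl
lemma phi_succ (m : ℕ) : phi (m+2) = if m = 0 then 4
    else 4 * ∑ j ∈ Finset.Icc 1 (m+1), (theta (m+2) * b (m+1) j - 3 * a (m+1) j) := rfl
lemma a_succ (m j : ℕ) : a (m+2) j = if j = m+2 then phi (m+2) else 4 * a (m+1) j := rfl
lemma b_succ (m j : ℕ) : b (m+2) j = if j = m+2 then 1 else (1 + theta (m+2)) * b (m+1) j := rfl

/-- The package of invariants at level `m+1`. -/
lemma inv (m : ℕ) :
    (∀ j, 0 ≤ a (m+1) j) ∧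
    (∀ j ∈ Finset.Icc 1 (m+1), a (m+1) j ≤ a (m+1) (m+1)) ∧
    (1 ≤ a (m+1) (m+1)) ∧
    (∀ j ∈ Finset.Icc 1 (m+1), 1 ≤ b (m+1) j) ∧
    (∀ j ∈ Finset.Icc 1 m, 4 ≤ b (m+1) j) ∧
    (∑ j ∈ Finset.Icc 1 (m+1), a (m+1) j ≤ 2 * a (m+1) (m+1)) := by
  induction m with
  | zero =>
    refine ⟨?_, ?_, ?_, ?_, ?_, ?_⟩ <;>
      simp [a_one, b_one] <;> intro j <;> split <;> norm_num
  | succ m ih =>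
    obtain ⟨h0, h1, h2, h3, h4, h5⟩ := ih
    set amax := a (m+1) (m+1) with hamax
    have hth : theta (m+2) = 3 * amax := theta_succ m
    -- φ(m+2) ≥ 4 * amax
    have hmem : ∀ j ∈ Finset.Icc 1 (m+1), 0 ≤ theta (m+2) * b (m+1) j - 3 * a (m+1) j := by
      intro j hj
      have hb := h3 j hj
      have ha := h1 j hj
      rw [hth]
      nlinarith [h2]
    have hkey : 4 * amax ≤ phi (m+2) ∧
        4 * ∑ j ∈ Finset.Icc 1 (m+1), a (m+1) j ≤ phi (m+2) := by
      rcases Nat.eq_zero_or_pos m with hm | hm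
      · subst hm
        have hx : amax = 1 := by simpa [a_one] using hamax
        have hy : ∑ j ∈ Finset.Icc 1 (0+1), a (0+1) j = 1 := by
          simp [a_one]
        rw [phi_succ, hx, hy]; norm_num
      · rw [phi_succ, if_neg (Nat.pos_iff_ne_zero.mp hm)]
        have h1mem : 1 ∈ Finset.Icc 1 (m+1) := by simp
        have ht1 : 9 * amax ≤ theta (m+2) * b (m+1) 1 - 3 * a (m+1) 1 := by
          have hb1 : 4 ≤ b (m+1) 1 := h4 1 (Finset.mem_Icc.mpr ⟨le_refl 1, hm⟩)
          have ha1 : a (m+1) 1 ≤ amax := h1 1 h1mem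
          rw [hth]; nlinarith [h2]
        have hs : 9 * amax ≤ ∑ j ∈ Finset.Icc 1 (m+1),
            (theta (m+2) * b (m+1) j - 3 * a (m+1) j) :=
          le_trans ht1 (Finset.single_le_sum hmem h1mem)
        constructor <;> nlinarith [h2, h5]
    obtain ⟨hphi4, hphiS⟩ := hkey
    have hphi0 : 0 ≤ phi (m+2) := le_trans (by nlinarith [h2]) hphi4
    have hphi1 : 1 ≤ phi (m+2) := le_trans (by nlinarith [h2]) hphi4
    have hatop : a (m+2) (m+2) = phi (m+2) := by rw [a_succ, if_pos rfl]
    refine ⟨?_, ?_, ?_, ?_, ?_, ?_⟩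
    · intro j
      rw [a_succ]; split
      · exact hphi0
      · nlinarith [h0 j]
    · intro j hj
      rw [a_succ, hatop]
      split
      · exact le_rfl
      · rename_i hne
        have hj' : j ∈ Finset.Icc 1 (m+1) := by
          simp only [Finset.mem_Icc] at hj ⊢; omega
        have := h1 j hj'
        nlinarith [hphi4]
    · rw [hatop]; exact hphi1
    · intro j hj
      rw [b_succ]; split
      · norm_num
      · rename_i hne
        have hj' : j ∈ Finset.Icc 1 (m+1) := by
          simp only [Finset.mem_Icc] at hj ⊢; omega
        have := h3 j hj'
        rw [hth]; nlinarith [h2]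
    · intro j hj
      have hj' : j ∈ Finset.Icc 1 (m+1) := hj
      have hne : j ≠ m+2 := by
        simp only [Finset.mem_Icc] at hj; omega
      rw [b_succ, if_neg hne]
      have := h3 j hj'
      rw [hth]; nlinarith [h2]
    · have hsplit : ∑ j ∈ Finset.Icc 1 (m+2), a (m+2) j
          = ∑ j ∈ Finset.Icc 1 (m+1), a (m+2) j + a (m+2) (m+2) :=
        Finset.sum_Icc_succ_top (by omega) _
      rw [hsplit, hatop]
      have h4a : ∑ j ∈ Finset.Icc 1 (m+1), a (m+2) j
          = 4 * ∑ j ∈ Finset.Icc 1 (m+1), a (m+1) j := by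
        rw [Finset.mul_sum]
        refine Finset.sum_congr rfl fun j hj => ?_
        have hne : j ≠ m+2 := by simp only [Finset.mem_Icc] at hj; omega
        rw [a_succ, if_neg hne]
      rw [h4a]
      linarith [hphiS]

theorem sum_a_bound (n : ℕ) (hn : 4 ≤ n) :
    ∑ j ∈ Finset.Icc 1 (n-2), 3 * a (n-2) j ≤ phi (n-1) := by
  obtain ⟨k, rfl⟩ : ∃ k, n = k + 4 := ⟨n - 4, by omega⟩
  have e2 : k + 4 - 2 = k + 2 := by omega
  have e1 : k + 4 - 1 = k + 3 := by omega
  rw [e2, e1]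
  obtain ⟨h0, h1, h2, h3, h4, h5⟩ := inv (k+1)
  set amax := a (k+2) (k+2) with hamax
  have hth : theta (k+3) = 3 * amax := theta_succ (k+1)
  have hphi : phi (k+3) = 4 * ∑ j ∈ Finset.Icc 1 (k+2),
      (theta (k+3) * b (k+2) j - 3 * a (k+2) j) := by
    rw [phi_succ, if_neg (by omega : k + 1 ≠ 0)]
  -- split off top index k+2 on both sides
  have hsplitL : ∑ j ∈ Finset.Icc 1 (k+2), 3 * a (k+2) j
      = ∑ j ∈ Finset.Icc 1 (k+1), 3 * a (k+2) j + 3 * amax :=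
    Finset.sum_Icc_succ_top (by omega) _
  have hbtop : b (k+2) (k+2) = 1 := by rw [b_succ, if_pos rfl]
  have hsplitR : ∑ j ∈ Finset.Icc 1 (k+2), (theta (k+3) * b (k+2) j - 3 * a (k+2) j)
      = ∑ j ∈ Finset.Icc 1 (k+1), (theta (k+3) * b (k+2) j - 3 * a (k+2) j) := by
    rw [Finset.sum_Icc_succ_top (by omega : 1 ≤ k+2), hbtop, hth]
    ring
  have hcard : (Finset.Icc 1 (k+1)).card = k + 1 := by
    rw [Nat.card_Icc]; omega
  have hL : ∑ j ∈ Finset.Icc 1 (k+1), 3 * a (k+2) j ≤ (k+1 : ℚ) * (3 * amax) := by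
    calc ∑ j ∈ Finset.Icc 1 (k+1), 3 * a (k+2) j
        ≤ (Finset.Icc 1 (k+1)).card • (3 * amax) := by
          refine Finset.sum_le_card_nsmul _ _ _ fun j hj => ?_
          have hj' : j ∈ Finset.Icc 1 (k+2) := by
            simp only [Finset.mem_Icc] at hj ⊢; omega
          have := h1 j hj'
          linarith
      _ = (k+1 : ℚ) * (3 * amax) := by
          rw [hcard, nsmul_eq_mul]; push_cast; ring
  have hR : (k+1 : ℚ) * (9 * amax) ≤
      ∑ j ∈ Finset.Icc 1 (k+1), (theta (k+3) * b (k+2) j - 3 * a (k+2) j) := by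
    calc (k+1 : ℚ) * (9 * amax)
        = (Finset.Icc 1 (k+1)).card • (9 * amax) := by
          rw [hcard, nsmul_eq_mul]; push_cast; ring
      _ ≤ _ := by
          refine Finset.card_nsmul_le_sum _ _ _ fun j hj => ?_
          have hj' : j ∈ Finset.Icc 1 (k+2) := by
            simp only [Finset.mem_Icc] at hj ⊢; omega
          have hb4 : 4 ≤ b (k+2) j := h4 j hj
          have ha := h1 j hj'
          rw [hth]
          nlinarith [h2]
  rw [hsplitL, hphi, hsplitR]
  have hk0 : (0:ℚ) ≤ (k:ℚ) := Nat.cast_nonneg k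
  nlinarith [h2, hL, hR]
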